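/- The matrices [[1,2],[0,1]] and [[0,1],[-1,0]] generate the theta group Γ_θ = {[[a,b],[c,d]] ∈ SL(2,ℤ) : ab ≡ cd ≡ 0 (mod 2)}. -/

import Mathlib

open Matrix

/-- The matrix `[[1,2],[0,1]]` in `SL(2,ℤ)`. -/
def T2 : Matrix.SpecialLinearGroup (Fin 2) ℤ :=
  ⟨!![1, 2; 0, 1], by norm_num [Matrix.det_fin_two_of]⟩

/-- The matrix `[[0,1],[-1,0]]` in `SL(2,ℤ)`. -/
def S : Matrix.SpecialLinearGroup (Fin 2) ℤ :=
  ⟨!![0, 1; -1, 0], by norm_num [Matrix.det_fin_two_of]⟩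

lemma T2_zpow (k : ℤ) :
    ((T2 ^ k : Matrix.SpecialLinearGroup (Fin 2) ℤ) : Matrix (Fin 2) (Fin 2) ℤ) = !![1, 2*k; 0, 1] := by
  induction k using Int.induction_on with
  | zero =>
    simp only [zpow_zero, Matrix.SpecialLinearGroup.coe_one]
    exact Matrix.one_fin_two
  | succ n ih =>
    rw [_root_.zpow_add, zpow_one, Matrix.SpecialLinearGroup.coe_mul, ih]
    show _ * (T2 : Matrix (Fin 2) (Fin 2) ℤ) = _
    rw [show (T2 : Matrix (Fin 2) (Fin 2) ℤ) = !![1,2;0,1] from rfl, Matrix.mul_fin_two]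
    congr 1 <;> ring
  | pred n ih =>
    rw [sub_eq_add_neg, _root_.zpow_add, Matrix.SpecialLinearGroup.coe_mul, ih]
    have hinv : ((T2 ^ (-1 : ℤ) : Matrix.SpecialLinearGroup (Fin 2) ℤ) : Matrix (Fin 2) (Fin 2) ℤ)
        = !![1,-2;0,1] := by
      rw [_root_.zpow_neg, zpow_one]
      rw [Matrix.SpecialLinearGroup.SL2_inv_expl]
      norm_num [T2]
      rfl
    rw [hinv, Matrix.mul_fin_two]
    congr 1 <;> ring

lemma cast2 (x : ℤ) : (2:ℤ) ∣ x ↔ (x : ZMod 2) = 0 := by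
  exact_mod_cast (ZMod.intCast_zmod_eq_zero_iff_dvd x 2).symm

lemma ncast2 (x : ℤ) : ¬ (2:ℤ) ∣ x ↔ (x : ZMod 2) = 1 := by
  rw [cast2]
  revert x
  intro x
  have : ∀ y : ZMod 2, (¬ y = 0) ↔ y = 1 := by decide
  rw [← this]

lemma parity_helper (a b c d : ℤ) (hdet : a*d - b*c = 1) (h1 : 2 ∣ a*b) (h2 : 2 ∣ c*d) :
    (2 ∣ a ∧ 2 ∣ d ∧ ¬2∣b ∧ ¬2∣c) ∨ (¬2∣a ∧ ¬2∣d ∧ 2∣b ∧ 2∣c) := by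
  have hd : (a:ZMod 2)*d - b*c = 1 := by exact_mod_cast congrArg (fun x : ℤ => (x : ZMod 2)) hdet
  simp only [cast2] at h1 h2 ⊢
  simp only [show ∀ y : ZMod 2, (¬ y = 0) ↔ y = 1 from by decide]
  push_cast at h1 h2 ⊢
  revert hd h1 h2
  generalize (a : ZMod 2) = A
  generalize (b : ZMod 2) = B
  generalize (c : ZMod 2) = C
  generalize (d : ZMod 2) = D
  revert A B C D
  decide

lemma parity_mul (a b c d a' b' c' d' : ℤ)
    (hdet : a*d - b*c = 1) (hdet' : a'*d' - b'*c' = 1)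
    (h1 : 2 ∣ a*b) (h2 : 2 ∣ c*d) (h1' : 2 ∣ a'*b') (h2' : 2 ∣ c'*d') :
    2 ∣ (a*a'+b*c')*(a*b'+b*d') ∧ 2 ∣ (c*a'+d*c')*(c*b'+d*d') := by
  have hd : (a:ZMod 2)*d - b*c = 1 := by exact_mod_cast congrArg (fun x : ℤ => (x : ZMod 2)) hdet
  have hd' : (a':ZMod 2)*d' - b'*c' = 1 := by
    exact_mod_cast congrArg (fun x : ℤ => (x : ZMod 2)) hdet'
  simp only [cast2] at h1 h2 h1' h2' ⊢
  push_cast at h1 h2 h1' h2' ⊢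
  revert hd hd' h1 h2 h1' h2'
  generalize (a : ZMod 2) = A
  generalize (b : ZMod 2) = B
  generalize (c : ZMod 2) = C
  generalize (d : ZMod 2) = D
  generalize (a' : ZMod 2) = A'
  generalize (b' : ZMod 2) = B'
  generalize (c' : ZMod 2) = C'
  generalize (d' : ZMod 2) = D'
  revert A B C D A' B' C' D'
  decide

lemma exists_reduce (a c : ℤ) (hc : c ≠ 0) (hpar : ¬ ((2:ℤ) ∣ (a + c))) :
    ∃ k : ℤ, (a + 2*c*k).natAbs < c.natAbs := by
  set q : ℤ := a / (2*c) with hq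
  set r : ℤ := a % (2*c) with hr
  have e0 : a + 2*c*(-q) = r := by rw [hr, Int.emod_def]; ring
  have e1 : a + 2*c*(-q+1) = r + 2*c := by rw [← e0]; ring
  have e2 : a + 2*c*(-q-1) = r - 2*c := by rw [← e0]; ring
  have hr0 : 0 ≤ r := Int.emod_nonneg a (mul_ne_zero two_ne_zero hc)
  have hrlt : r < 2 * (c.natAbs : ℤ) := by
    rcases lt_or_gt_of_ne hc with h | h
    · have h2 : a % (2*c) = a % (2*(-c)) := by rw [show (2:ℤ)*c = -(2*(-c)) by ring, Int.emod_neg]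
      have := Int.emod_lt_of_pos a (show (0:ℤ) < 2*(-c) by omega)
      omega
    · have := Int.emod_lt_of_pos a (show (0:ℤ) < 2*c by omega)
      omega
  have hpar2 : ¬ ((2:ℤ) ∣ (r + c)) := by
    intro h
    apply hpar
    have heq : a + c = (r + c) + (2*c)*q := by rw [← e0]; ring
    rcases h with ⟨m, hm⟩
    exact ⟨m + c*q, by rw [heq, hm]; ring⟩
  by_cases hsm : r < (c.natAbs : ℤ)
  · exact ⟨-q, by rw [e0]; omega⟩
  · rcases lt_or_gt_of_ne hc with h | h
    · exact ⟨-q+1, by rw [e1]; omega⟩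
    · exact ⟨-q-1, by rw [e2]; omega⟩

lemma det_entries (g : Matrix.SpecialLinearGroup (Fin 2) ℤ) :
    (g : Matrix (Fin 2) (Fin 2) ℤ) 0 0 * (g : Matrix (Fin 2) (Fin 2) ℤ) 1 1
      - (g : Matrix (Fin 2) (Fin 2) ℤ) 0 1 * (g : Matrix (Fin 2) (Fin 2) ℤ) 1 0 = 1 := by
  rw [← Matrix.det_fin_two]
  exact g.prop

lemma mem_closure_aux : ∀ n : ℕ, ∀ g : Matrix.SpecialLinearGroup (Fin 2) ℤ,
    ((g : Matrix (Fin 2) (Fin 2) ℤ) 1 0).natAbs = n →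
    2 ∣ (g : Matrix (Fin 2) (Fin 2) ℤ) 0 0 * (g : Matrix (Fin 2) (Fin 2) ℤ) 0 1 →
    2 ∣ (g : Matrix (Fin 2) (Fin 2) ℤ) 1 0 * (g : Matrix (Fin 2) (Fin 2) ℤ) 1 1 →
    g ∈ Subgroup.closure {T2, S} := by
  have hT2 : T2 ∈ Subgroup.closure {T2, S} := Subgroup.subset_closure (by simp)
  have hS : S ∈ Subgroup.closure {T2, S} := Subgroup.subset_closure (by simp)
  intro n
  induction n using Nat.strong_induction_on with
  | _ n ih =>
    intro g hn h1 h2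
    set a := (g : Matrix (Fin 2) (Fin 2) ℤ) 0 0 with ha
    set b := (g : Matrix (Fin 2) (Fin 2) ℤ) 0 1 with hb
    set c := (g : Matrix (Fin 2) (Fin 2) ℤ) 1 0 with hc
    set d := (g : Matrix (Fin 2) (Fin 2) ℤ) 1 1 with hd
    have hg : (g : Matrix (Fin 2) (Fin 2) ℤ) = !![a, b; c, d] := by
      rw [ha, hb, hc, hd]; exact Matrix.eta_fin_two _
    have hdet : a * d - b * c = 1 := det_entries g
    by_cases hc0 : c = 0
    · -- base case
      have had : a * d = 1 := by rw [hc0] at hdet; linarith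
      have hb2 : 2 ∣ b := by
        rcases Int.eq_one_or_neg_one_of_mul_eq_one' had with ⟨h', _⟩ | ⟨h', _⟩ <;>
          rw [h'] at h1 <;> omega
      obtain ⟨m, hm⟩ := hb2
      rcases Int.eq_one_or_neg_one_of_mul_eq_one' had with ⟨ha1, hd1⟩ | ⟨ha1, hd1⟩
      · have : g = T2 ^ m := by
          apply Subtype.ext
          rw [T2_zpow, hg, ha1, hd1, hc0, hm]
        rw [this]
        exact zpow_mem hT2 _
      · have : g = S ^ 2 * T2 ^ (-m) := by
          apply Subtype.ext
          rw [Matrix.SpecialLinearGroup.coe_mul, T2_zpow]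
          have hS2 : ((S ^ 2 : Matrix.SpecialLinearGroup (Fin 2) ℤ) : Matrix (Fin 2) (Fin 2) ℤ)
              = !![-1, 0; 0, -1] := by
            rw [sq, Matrix.SpecialLinearGroup.coe_mul]
            show (!![0, 1; -1, 0] : Matrix (Fin 2) (Fin 2) ℤ) * !![0, 1; -1, 0] = _
            rw [Matrix.mul_fin_two]; norm_num
          rw [hS2, Matrix.mul_fin_two, hg, ha1, hd1, hc0, hm]
          congr 1 <;> ring
        rw [this]
        exact mul_mem (pow_mem hS 2) (zpow_mem hT2 _)
    · -- inductive step
      have hpar : ¬ ((2:ℤ) ∣ (a + c)) := by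
        rcases parity_helper a b c d hdet h1 h2 with ⟨hpa, hpd, hpb, hpc⟩ | ⟨hpa, hpd, hpb, hpc⟩ <;>
          omega
      obtain ⟨k, hk⟩ := exists_reduce a c hc0 hpar
      set h : Matrix.SpecialLinearGroup (Fin 2) ℤ := S * T2 ^ k * g with hh
      have hcoe : (h : Matrix (Fin 2) (Fin 2) ℤ)
          = !![c, d; -(a + 2*c*k), -(b + 2*d*k)] := by
        rw [hh, Matrix.SpecialLinearGroup.coe_mul, Matrix.SpecialLinearGroup.coe_mul, T2_zpow, hg]
        show (!![0, 1; -1, 0] : Matrix (Fin 2) (Fin 2) ℤ) * _ * _ = _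
        rw [Matrix.mul_fin_two, Matrix.mul_fin_two]
        congr 1 <;> ring
      have e00 : (h : Matrix (Fin 2) (Fin 2) ℤ) 0 0 = c := by rw [hcoe]; simp
      have e01 : (h : Matrix (Fin 2) (Fin 2) ℤ) 0 1 = d := by rw [hcoe]; simp
      have e10 : (h : Matrix (Fin 2) (Fin 2) ℤ) 1 0 = -(a + 2*c*k) := by rw [hcoe]; simp
      have e11 : (h : Matrix (Fin 2) (Fin 2) ℤ) 1 1 = -(b + 2*d*k) := by rw [hcoe]; simp
      have hmem : h ∈ Subgroup.closure {T2, S} := by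
        apply ih ((-(a + 2*c*k)).natAbs) (by rw [Int.natAbs_neg]; omega) h
        · rw [e10]
        · rw [e00, e01]; exact h2
        · rw [e10, e11]
          have heq : (-(a + 2*c*k)) * (-(b + 2*d*k)) = a*b + 2*(a*d*k + c*k*b + 2*c*k*d*k) := by ring
          rw [heq]
          exact dvd_add h1 ⟨_, rfl⟩
      have hgeq : g = (S * T2 ^ k)⁻¹ * h := by rw [hh]; group
      rw [hgeq]
      exact mul_mem (inv_mem (mul_mem hS (zpow_mem hT2 k))) hmem

/-- `[[1,2],[0,1]]` and `[[0,1],[-1,0]]` generate the theta group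
`Γ_θ = {[[a,b],[c,d]] ∈ SL(2,ℤ) : ab ≡ cd ≡ 0 (mod 2)}`. -/
theorem theta_group_generators (g : Matrix.SpecialLinearGroup (Fin 2) ℤ) :
    g ∈ Subgroup.closure {T2, S} ↔
      (2 ∣ (g : Matrix (Fin 2) (Fin 2) ℤ) 0 0 * (g : Matrix (Fin 2) (Fin 2) ℤ) 0 1 ∧
       2 ∣ (g : Matrix (Fin 2) (Fin 2) ℤ) 1 0 * (g : Matrix (Fin 2) (Fin 2) ℤ) 1 1) := by
  constructor
  · intro hg
    induction hg using Subgroup.closure_induction with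
    | mem x hx =>
      rcases hx with rfl | rfl <;> norm_num [T2, S]
    | one => norm_num
    | mul x y hx hy ihx ihy =>
      have hx00 : ((x * y : Matrix.SpecialLinearGroup (Fin 2) ℤ) : Matrix (Fin 2) (Fin 2) ℤ)
          = (x : Matrix (Fin 2) (Fin 2) ℤ) * (y : Matrix (Fin 2) (Fin 2) ℤ) :=
        Matrix.SpecialLinearGroup.coe_mul x y
      simp only [hx00, Matrix.mul_apply, Fin.sum_univ_two]
      exact parity_mul _ _ _ _ _ _ _ _ (det_entries x) (det_entries y) ihx.1 ihx.2 ihy.1 ihy.2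
    | inv x hx ihx =>
      have hcoe : ((x⁻¹ : Matrix.SpecialLinearGroup (Fin 2) ℤ) : Matrix (Fin 2) (Fin 2) ℤ)
          = !![(x : Matrix (Fin 2) (Fin 2) ℤ) 1 1, -(x : Matrix (Fin 2) (Fin 2) ℤ) 0 1;
               -(x : Matrix (Fin 2) (Fin 2) ℤ) 1 0, (x : Matrix (Fin 2) (Fin 2) ℤ) 0 0] := by
        rw [Matrix.SpecialLinearGroup.SL2_inv_expl x]
        rfl
      have e00 : ((x⁻¹ : Matrix.SpecialLinearGroup (Fin 2) ℤ) : Matrix (Fin 2) (Fin 2) ℤ) 0 0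
          = (x : Matrix (Fin 2) (Fin 2) ℤ) 1 1 := by rw [hcoe]; simp
      have e01 : ((x⁻¹ : Matrix.SpecialLinearGroup (Fin 2) ℤ) : Matrix (Fin 2) (Fin 2) ℤ) 0 1
          = -(x : Matrix (Fin 2) (Fin 2) ℤ) 0 1 := by rw [hcoe]; simp
      have e10 : ((x⁻¹ : Matrix.SpecialLinearGroup (Fin 2) ℤ) : Matrix (Fin 2) (Fin 2) ℤ) 1 0
          = -(x : Matrix (Fin 2) (Fin 2) ℤ) 1 0 := by rw [hcoe]; simp
      have e11 : ((x⁻¹ : Matrix.SpecialLinearGroup (Fin 2) ℤ) : Matrix (Fin 2) (Fin 2) ℤ) 1 1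
          = (x : Matrix (Fin 2) (Fin 2) ℤ) 0 0 := by rw [hcoe]; simp
      rw [e00, e01, e10, e11]
      rcases parity_helper _ _ _ _ (det_entries x) ihx.1 ihx.2 with
        ⟨hpa, hpd, _, _⟩ | ⟨_, _, hpb, hpc⟩
      · refine ⟨hpd.mul_right _, ?_⟩
        rw [neg_mul, dvd_neg]
        exact hpa.mul_left _
      · exact ⟨((dvd_neg.mpr hpb).mul_left _), ((dvd_neg.mpr hpc).mul_right _)⟩
  · rintro ⟨h1, h2⟩
    exact mem_closure_aux _ g rfl h1 h2
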